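/- Let (W₁,V₁),…,(W_n,V_n) be i.i.d. copies of a pair (W,V), where W is a random element of a separable Hilbert space G₁ with ‖W‖ ≤ M almost surely, and V = κ̃_Z(·,Z) is the centered kernel section of a random element Z, with covariance operator Σ_ZZ having eigenvalues γ₁ ≥ γ₂ ≥ … and E[W ⊗ V] = 0 (e.g. E[W | Z] = 0, as holds for W = κ̃_{Ẍ|Z}(·,Ẍ|Z)). Then for every ε > 0, E‖ E_n[W ⊗ V] (Σ_ZZ + εI)^{−1} ‖²_HS ≤ M² n^{−1} Σ_{k=1}^∞ γ_k/(γ_k + ε)², where E_n denotes the sample average over i = 1,…,n and ‖·‖_HS is the Hilbert–Schmidt norm. -/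

import Mathlib

/-!
# Statement 16

`(W₁,V₁),…,(W_n,V_n)` are i.i.d. copies of `(W,V)` where `W` is a bounded
(`‖W‖ ≤ M` a.s.) random element of a separable Hilbert space `G₁` and
`V = κ̃_Z(·,Z)` is the centered kernel section of `Z`, with covariance
operator `Σ_ZZ` having eigenvalues `γ₁ ≥ γ₂ ≥ …` and `E[W ⊗ V] = 0`.
Then for every `ε > 0`,
`E‖E_n[W ⊗ V] (Σ_ZZ + εI)^{−1}‖²_HS ≤ M² n^{−1} Σ_k γ_k/(γ_k + ε)²`,
the squared Hilbert–Schmidt norm being computed along a Hilbert basis of `G_Z`.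
-/

open MeasureTheory ProbabilityTheory Filter
open scoped RealInnerProductSpace ENNReal

noncomputable section

/-- The rank-one operator `u ⊗ v : H₂ → H₁`, `w ↦ ⟪v, w⟫ u`. -/
def rankOne {H1 H2 : Type*} [NormedAddCommGroup H1] [InnerProductSpace ℝ H1]
    [NormedAddCommGroup H2] [InnerProductSpace ℝ H2] (u : H1) (v : H2) : H2 →L[ℝ] H1 :=
  (innerSL ℝ v).smulRight u

variable {Ω : Type*} [MeasurableSpace Ω]

/-- The mean element `μ = E[k(·,X)] ∈ G` (Bochner integral). -/
def meanElem {H G : Type*} [NormedAddCommGroup G] [InnerProductSpace ℝ G] [CompleteSpace G]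
    (P : Measure Ω) (k : H → G) (X : Ω → H) : G :=
  ∫ ω, k (X ω) ∂P

/-- The centered kernel section `κ̃(·,x) = κ(·,x) − μ`. -/
def ctrKer {H G : Type*} [NormedAddCommGroup G] [InnerProductSpace ℝ G] [CompleteSpace G]
    (P : Measure Ω) (k : H → G) (X : Ω → H) (x : H) : G :=
  k x - meanElem P k X

/-- The covariance operator `Σ_ZZ = E[κ̃_Z(·,Z) ⊗ κ̃_Z(·,Z)]`. -/
def covOp {H G : Type*} [NormedAddCommGroup G] [InnerProductSpace ℝ G] [CompleteSpace G]
    (P : Measure Ω) (k : H → G) (Z : Ω → H) : G →L[ℝ] G :=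
  ∫ ω, rankOne (ctrKer P k Z (Z ω)) (ctrKer P k Z (Z ω)) ∂P

/-- Squared Hilbert–Schmidt norm of an operator, computed along a Hilbert
basis of the domain. -/
def hsNormSq {G1 G2 : Type*} [NormedAddCommGroup G1] [InnerProductSpace ℝ G1]
    [NormedAddCommGroup G2] [InnerProductSpace ℝ G2] [CompleteSpace G2]
    (b : HilbertBasis ℕ ℝ G2) (T : G2 →L[ℝ] G1) : ℝ :=
  ∑' k, ‖T (b k)‖ ^ 2

lemma rankOne_apply {H1 H2 : Type*} [NormedAddCommGroup H1] [InnerProductSpace ℝ H1]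
    [NormedAddCommGroup H2] [InnerProductSpace ℝ H2] (u : H1) (v : H2) (w : H2) :
    rankOne u v w = ⟪v, w⟫ • u := rfl

lemma norm_rankOne {H1 H2 : Type*} [NormedAddCommGroup H1] [InnerProductSpace ℝ H1]
    [NormedAddCommGroup H2] [InnerProductSpace ℝ H2] (u : H1) (v : H2) :
    ‖rankOne u v‖ = ‖v‖ * ‖u‖ := by
  rw [rankOne, ContinuousLinearMap.norm_smulRight_apply, innerSL_apply_norm]

lemma continuous_rankOne {H1 H2 : Type*} [NormedAddCommGroup H1] [InnerProductSpace ℝ H1]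
    [NormedAddCommGroup H2] [InnerProductSpace ℝ H2] :
    Continuous fun p : H1 × H2 => rankOne p.1 p.2 := by
  have h : (fun p : H1 × H2 => rankOne p.1 p.2)
      = fun p : H1 × H2 => ContinuousLinearMap.smulRightL ℝ H2 H1 (innerSL ℝ p.2) p.1 := rfl
  rw [h]
  exact ((ContinuousLinearMap.smulRightL ℝ H2 H1).continuous.comp
    ((innerSL ℝ).continuous.comp continuous_snd)).clm_apply continuous_fst


/-- independent integrable Hilbert-valued random elements have uncorrelated inner product. -/
lemma IndepFun.integral_inner_eq {E : Type*} [NormedAddCommGroup E] [InnerProductSpace ℝ E]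
    [CompleteSpace E] [SecondCountableTopology E] [MeasurableSpace E] [BorelSpace E]
    (P : Measure Ω) [IsProbabilityMeasure P] {A B : Ω → E}
    (hAm : Measurable A) (hBm : Measurable B)
    (hA : Integrable A P) (hB : Integrable B P) (h : IndepFun A B P) :
    ∫ ω, ⟪A ω, B ω⟫ ∂P = ⟪∫ ω, A ω ∂P, ∫ ω, B ω ∂P⟫ := by
  have hmap : P.map (fun ω => (A ω, B ω)) = (P.map A).prod (P.map B) :=
    (indepFun_iff_map_prod_eq_prod_map_map hAm.aemeasurable hBm.aemeasurable).mp h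
  have hinner : AEStronglyMeasurable (fun p : E × E => ⟪p.1, p.2⟫)
      ((P.map A).prod (P.map B)) := continuous_inner.aestronglyMeasurable
  have hIA : Integrable (fun x : E => x) (P.map A) :=
    (integrable_map_measure stronglyMeasurable_id.aestronglyMeasurable
      hAm.aemeasurable).mpr hA
  have hIB : Integrable (fun x : E => x) (P.map B) :=
    (integrable_map_measure stronglyMeasurable_id.aestronglyMeasurable
      hBm.aemeasurable).mpr hB
  have hprodint : Integrable (fun p : E × E => ⟪p.1, p.2⟫) ((P.map A).prod (P.map B)) := by
    have hnorm : Integrable (fun p : E × E => ‖p.1‖ * ‖p.2‖) ((P.map A).prod (P.map B)) :=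
      Integrable.mul_prod hIA.norm hIB.norm
    refine hnorm.mono' hinner ?_
    refine Filter.Eventually.of_forall fun p => ?_
    simpa using abs_real_inner_le_norm p.1 p.2
  calc ∫ ω, ⟪A ω, B ω⟫ ∂P
      = ∫ p : E × E, ⟪p.1, p.2⟫ ∂((P.map A).prod (P.map B)) := by
        rw [← hmap, integral_map (hAm.aemeasurable.prodMk hBm.aemeasurable)
          continuous_inner.aestronglyMeasurable]
    _ = ∫ x, ∫ y, ⟪x, y⟫ ∂(P.map B) ∂(P.map A) := integral_prod _ hprodint
    _ = ∫ x, ⟪x, ∫ y, y ∂(P.map B)⟫ ∂(P.map A) := by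
        refine integral_congr_ae (Filter.Eventually.of_forall fun x => ?_)
        exact integral_inner hIB x
    _ = ∫ x, ⟪∫ y, y ∂(P.map B), x⟫ ∂(P.map A) := by
        refine integral_congr_ae (Filter.Eventually.of_forall fun x => ?_)
        exact real_inner_comm _ _
    _ = ⟪∫ y, y ∂(P.map B), ∫ x, x ∂(P.map A)⟫ := (integral_inner hIA _)
    _ = ⟪∫ x, x ∂(P.map A), ∫ y, y ∂(P.map B)⟫ := real_inner_comm _ _
    _ = ⟪∫ ω, A ω ∂P, ∫ ω, B ω ∂P⟫ := by
        have e1 : ∫ x, x ∂(P.map A) = ∫ ω, A ω ∂P :=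
          integral_map hAm.aemeasurable aestronglyMeasurable_id
        have e2 : ∫ y, y ∂(P.map B) = ∫ ω, B ω ∂P :=
          integral_map hBm.aemeasurable aestronglyMeasurable_id
        rw [e1, e2]

set_option maxHeartbeats 1000000 in
theorem statement16
    (P : Measure Ω) [IsProbabilityMeasure P]
    {G1 HZ GZ : Type*}
    [NormedAddCommGroup G1] [InnerProductSpace ℝ G1] [CompleteSpace G1]
    [SecondCountableTopology G1] [MeasurableSpace G1] [BorelSpace G1]
    [NormedAddCommGroup HZ] [InnerProductSpace ℝ HZ] [CompleteSpace HZ]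
    [SecondCountableTopology HZ] [MeasurableSpace HZ] [BorelSpace HZ]
    [NormedAddCommGroup GZ] [InnerProductSpace ℝ GZ] [CompleteSpace GZ]
    [SecondCountableTopology GZ] [MeasurableSpace GZ] [BorelSpace GZ]
    (b : HilbertBasis ℕ ℝ GZ)
    -- the pair (W, V) with V = κ̃_Z(·,Z)
    (W : Ω → G1) (Z : Ω → HZ) (hW : Measurable W) (hZ : Measurable Z)
    (kZ : HZ → GZ) (hkZ : Measurable kZ)
    (hdZ : (Submodule.span ℝ (Set.range kZ)).topologicalClosure = ⊤)
    (hmZ : Integrable (fun ω => ⟪kZ (Z ω), kZ (Z ω)⟫) P)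
    -- ‖W‖ ≤ M almost surely
    (M : ℝ) (hM : 0 ≤ M) (hWbd : ∀ᵐ ω ∂P, ‖W ω‖ ≤ M)
    -- E[W ⊗ V] = 0 (e.g. E[W | Z] = 0)
    (hzero : (∫ ω, rankOne (W ω) (ctrKer P kZ Z (Z ω)) ∂P) = 0)
    -- spectral decomposition of Σ_ZZ with eigenvalues γ₁ ≥ γ₂ ≥ … ≥ 0
    (γ : ℕ → ℝ) (φ : ℕ → GZ) (hφ : Orthonormal ℝ φ)
    (hγpos : ∀ k, 0 ≤ γ k) (hγmono : Antitone γ)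
    (hspec : ∀ f : GZ, covOp P kZ Z f = ∑' k, (γ k * ⟪φ k, f⟫) • φ k)
    -- i.i.d. copies (Wᵢ, Vᵢ) of (W, V)
    (Ws : ℕ → Ω → G1) (Zs : ℕ → Ω → HZ)
    (hmeas : ∀ i, Measurable (Ws i) ∧ Measurable (Zs i))
    (hiid : iIndepFun (fun i ω => (Ws i ω, Zs i ω)) P)
    (hident : ∀ i, IdentDistrib (fun ω => (Ws i ω, Zs i ω)) (fun ω => (W ω, Z ω)) P P) :
    ∀ ε : ℝ, 0 < ε → ∀ n : ℕ, 0 < n →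
      (∫⁻ ω, ENNReal.ofReal (hsNormSq b
          ((((n : ℝ)⁻¹ • ∑ i ∈ Finset.range n,
              rankOne (Ws i ω) (ctrKer P kZ Z (Zs i ω))) :
            GZ →L[ℝ] G1).comp (Ring.inverse (covOp P kZ Z + ε • 1)))) ∂P)
        ≤ ENNReal.ofReal (M ^ 2 * (n : ℝ)⁻¹ * ∑' k, γ k / (γ k + ε) ^ 2) := by
  intro ε hε n hn
  classical
  by_cases hUnit : IsUnit (covOp P kZ Z + ε • (1 : GZ →L[ℝ] GZ))
  swap
  · rw [Ring.inverse_non_unit _ hUnit]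
    have h0 : ∀ ω : Ω, hsNormSq b
        ((((n : ℝ)⁻¹ • ∑ i ∈ Finset.range n,
            rankOne (Ws i ω) (ctrKer P kZ Z (Zs i ω))) :
          GZ →L[ℝ] G1).comp (0 : GZ →L[ℝ] GZ)) = 0 := by
      intro ω
      simp [hsNormSq]
    simp only [h0, ENNReal.ofReal_zero, lintegral_zero]
    exact zero_le
  -- notation
  set T : GZ →L[ℝ] GZ := covOp P kZ Z + ε • 1 with hTdef
  set S : GZ →L[ℝ] GZ := Ring.inverse T with hSdef
  have hTS : ∀ x : GZ, T (S x) = x := by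
    intro x
    have h := Ring.mul_inverse_cancel T hUnit
    have := DFunLike.congr_fun h x
    simpa [ContinuousLinearMap.mul_apply] using this
  have hST : ∀ x : GZ, S (T x) = x := by
    intro x
    have h := Ring.inverse_mul_cancel T hUnit
    have := DFunLike.congr_fun h x
    simpa [ContinuousLinearMap.mul_apply] using this
  -- measurability of the centered sections
  have hVm : Measurable fun ω => ctrKer P kZ Z (Z ω) :=
    (hkZ.comp hZ).sub measurable_const
  have hVsm : ∀ i, Measurable fun ω => ctrKer P kZ Z (Zs i ω) :=
    fun i => (hkZ.comp (hmeas i).2).sub measurable_const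
  -- L² bounds for V
  have hkZL2 : MemLp (fun ω => kZ (Z ω)) 2 P := by
    have hmeas1 : AEStronglyMeasurable (fun ω => kZ (Z ω)) P :=
      (hkZ.comp hZ).aestronglyMeasurable
    rw [memLp_two_iff_integrable_sq_norm hmeas1]
    have : (fun ω => ⟪kZ (Z ω), kZ (Z ω)⟫) = fun ω => ‖kZ (Z ω)‖ ^ 2 := by
      funext ω; rw [real_inner_self_eq_norm_sq]
    rwa [this] at hmZ
  have hVL2 : MemLp (fun ω => ctrKer P kZ Z (Z ω)) 2 P :=
    hkZL2.sub (memLp_const (meanElem P kZ Z))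
  have hV2 : Integrable (fun ω => ‖ctrKer P kZ Z (Z ω)‖ ^ 2) P :=
    (memLp_two_iff_integrable_sq_norm hVL2.aestronglyMeasurable).mp hVL2
  have hV1 : Integrable (fun ω => ctrKer P kZ Z (Z ω)) P := hVL2.integrable one_le_two
  -- integrability of inner products squared
  have hIu2 : ∀ u : GZ, Integrable (fun ω => ⟪ctrKer P kZ Z (Z ω), u⟫ ^ 2) P := by
    intro u
    refine (hV2.const_mul (‖u‖ ^ 2)).mono'
      ((hVm.inner measurable_const).pow_const 2).aestronglyMeasurable ?_
    refine Filter.Eventually.of_forall fun ω => ?_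
    have h1 : |⟪ctrKer P kZ Z (Z ω), u⟫| ≤ ‖ctrKer P kZ Z (Z ω)‖ * ‖u‖ :=
      abs_real_inner_le_norm _ _
    have h2 : ⟪ctrKer P kZ Z (Z ω), u⟫ ^ 2 ≤ (‖ctrKer P kZ Z (Z ω)‖ * ‖u‖) ^ 2 := by
      rw [← sq_abs]
      exact pow_le_pow_left₀ (abs_nonneg _) h1 2
    rw [Real.norm_eq_abs, abs_of_nonneg (sq_nonneg _)]
    nlinarith [norm_nonneg (ctrKer P kZ Z (Z ω)), norm_nonneg u]
  -- quadratic form of the covariance operator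
  have hIu : ∀ u : GZ, ∫ ω, ⟪ctrKer P kZ Z (Z ω), u⟫ ^ 2 ∂P = ⟪u, covOp P kZ Z u⟫ := by
    intro u
    have hRVVm : AEStronglyMeasurable
        (fun ω => rankOne (ctrKer P kZ Z (Z ω)) (ctrKer P kZ Z (Z ω))) P :=
      continuous_rankOne.comp_aestronglyMeasurable
        (hVm.aestronglyMeasurable.prodMk hVm.aestronglyMeasurable)
    have hRVV : Integrable (fun ω => rankOne (ctrKer P kZ Z (Z ω)) (ctrKer P kZ Z (Z ω))) P := by
      refine hV2.mono' hRVVm ?_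
      refine Filter.Eventually.of_forall fun ω => ?_
      rw [norm_rankOne]
      exact le_of_eq (pow_two ‖ctrKer P kZ Z (Z ω)‖).symm
    have happ : covOp P kZ Z u = ∫ ω, ⟪ctrKer P kZ Z (Z ω), u⟫ • ctrKer P kZ Z (Z ω) ∂P := by
      have h := ContinuousLinearMap.integral_apply (φ := fun ω => rankOne (ctrKer P kZ Z (Z ω))
        (ctrKer P kZ Z (Z ω))) hRVV u
      exact h
    have hintVV : Integrable (fun ω => ⟪ctrKer P kZ Z (Z ω), u⟫ • ctrKer P kZ Z (Z ω)) P := by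
      refine (hV2.const_mul ‖u‖).mono'
        (((hVm.inner measurable_const).stronglyMeasurable.smul
          hVm.stronglyMeasurable).aestronglyMeasurable) ?_
      refine Filter.Eventually.of_forall fun ω => ?_
      rw [norm_smul, Real.norm_eq_abs]
      have h1 : |⟪ctrKer P kZ Z (Z ω), u⟫| ≤ ‖ctrKer P kZ Z (Z ω)‖ * ‖u‖ :=
        abs_real_inner_le_norm _ _
      nlinarith [norm_nonneg (ctrKer P kZ Z (Z ω)), norm_nonneg u, abs_nonneg
        ⟪ctrKer P kZ Z (Z ω), u⟫]
    calc ∫ ω, ⟪ctrKer P kZ Z (Z ω), u⟫ ^ 2 ∂P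
        = ∫ ω, ⟪u, ⟪ctrKer P kZ Z (Z ω), u⟫ • ctrKer P kZ Z (Z ω)⟫ ∂P := by
          refine integral_congr_ae (Filter.Eventually.of_forall fun ω => ?_)
          simp only [real_inner_smul_right]
          rw [real_inner_comm u (ctrKer P kZ Z (Z ω))]
          ring
      _ = ⟪u, ∫ ω, ⟪ctrKer P kZ Z (Z ω), u⟫ • ctrKer P kZ Z (Z ω) ∂P⟫ :=
          integral_inner hintVV u
      _ = ⟪u, covOp P kZ Z u⟫ := by rw [← happ]
  have hQnonneg : ∀ u : GZ, 0 ≤ ⟪u, covOp P kZ Z u⟫ := by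
    intro u
    rw [← hIu u]
    exact integral_nonneg fun ω => sq_nonneg _
  have hn' : (n : ℝ) ≠ 0 := by positivity
  -- the key probabilistic estimate, for a fixed direction u
  have key : ∀ u : GZ,
      Integrable (fun ω => ‖(n : ℝ)⁻¹ •
        ∑ i ∈ Finset.range n, ⟪ctrKer P kZ Z (Zs i ω), u⟫ • Ws i ω‖ ^ 2) P ∧
      ∫ ω, ‖(n : ℝ)⁻¹ •
        ∑ i ∈ Finset.range n, ⟪ctrKer P kZ Z (Zs i ω), u⟫ • Ws i ω‖ ^ 2 ∂P
        ≤ M ^ 2 * (n : ℝ)⁻¹ * ⟪u, covOp P kZ Z u⟫ := by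
    intro u
    have hg : Measurable (fun p : G1 × HZ => ⟪ctrKer P kZ Z p.2, u⟫ • p.1) := by
      have h1 : Measurable fun p : G1 × HZ => ctrKer P kZ Z p.2 :=
        (hkZ.comp measurable_snd).sub measurable_const
      exact (h1.inner measurable_const).smul measurable_fst
    have hAuMeas : Measurable (fun ω => ⟪ctrKer P kZ Z (Z ω), u⟫ • W ω) :=
      (hVm.inner measurable_const).smul hW
    have hAiMeas : ∀ i, Measurable (fun ω => ⟪ctrKer P kZ Z (Zs i ω), u⟫ • Ws i ω) :=
      fun i => ((hVsm i).inner measurable_const).smul (hmeas i).1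
    have hAid : ∀ i, IdentDistrib (fun ω => ⟪ctrKer P kZ Z (Zs i ω), u⟫ • Ws i ω)
        (fun ω => ⟪ctrKer P kZ Z (Z ω), u⟫ • W ω) P P :=
      fun i => (hident i).comp hg
    have hAuL2 : MemLp (fun ω => ⟪ctrKer P kZ Z (Z ω), u⟫ • W ω) 2 P := by
      have hgL2 : MemLp (fun ω => (M * ‖u‖) * ‖ctrKer P kZ Z (Z ω)‖) 2 P :=
        hVL2.norm.const_mul (M * ‖u‖)
      refine hgL2.of_le hAuMeas.aestronglyMeasurable ?_
      filter_upwards [hWbd] with ω hω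
      rw [norm_smul, Real.norm_eq_abs, Real.norm_eq_abs]
      have h1 : |⟪ctrKer P kZ Z (Z ω), u⟫| ≤ ‖ctrKer P kZ Z (Z ω)‖ * ‖u‖ :=
        abs_real_inner_le_norm _ _
      have h2 : |⟪ctrKer P kZ Z (Z ω), u⟫| * ‖W ω‖ ≤ ‖ctrKer P kZ Z (Z ω)‖ * ‖u‖ * M :=
        mul_le_mul h1 hω (norm_nonneg _) (by positivity)
      have h3 : (0:ℝ) ≤ M * ‖u‖ * ‖ctrKer P kZ Z (Z ω)‖ := by positivity
      rw [abs_of_nonneg h3]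
      nlinarith
    have hAiL2 : ∀ i, MemLp (fun ω => ⟪ctrKer P kZ Z (Zs i ω), u⟫ • Ws i ω) 2 P :=
      fun i => ((hAid i).memLp_iff).mpr hAuL2
    have hAiInt : ∀ i, Integrable (fun ω => ⟪ctrKer P kZ Z (Zs i ω), u⟫ • Ws i ω) P :=
      fun i => (hAiL2 i).integrable one_le_two
    have hAu0 : ∫ ω, ⟪ctrKer P kZ Z (Z ω), u⟫ • W ω ∂P = 0 := by
      have hRm : AEStronglyMeasurable (fun ω => rankOne (W ω) (ctrKer P kZ Z (Z ω))) P :=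
        continuous_rankOne.comp_aestronglyMeasurable
          (hW.aestronglyMeasurable.prodMk hVm.aestronglyMeasurable)
      have hRint : Integrable (fun ω => rankOne (W ω) (ctrKer P kZ Z (Z ω))) P := by
        refine (hV1.norm.const_mul M).mono' hRm ?_
        filter_upwards [hWbd] with ω hω
        rw [norm_rankOne]
        nlinarith [norm_nonneg (ctrKer P kZ Z (Z ω)), norm_nonneg (W ω)]
      have h := ContinuousLinearMap.integral_apply hRint u
      rw [hzero] at h
      simpa [rankOne_apply] using h.symm
    have hAi0 : ∀ i, ∫ ω, ⟪ctrKer P kZ Z (Zs i ω), u⟫ • Ws i ω ∂P = 0 :=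
      fun i => ((hAid i).integral_eq).trans hAu0
    have hAiSqInt : ∀ i, Integrable (fun ω => ‖⟪ctrKer P kZ Z (Zs i ω), u⟫ • Ws i ω‖ ^ 2) P :=
      fun i => (memLp_two_iff_integrable_sq_norm (hAiL2 i).aestronglyMeasurable).mp (hAiL2 i)
    have hAuSqInt : Integrable (fun ω => ‖⟪ctrKer P kZ Z (Z ω), u⟫ • W ω‖ ^ 2) P :=
      (memLp_two_iff_integrable_sq_norm hAuL2.aestronglyMeasurable).mp hAuL2
    have hAuSq : ∫ ω, ‖⟪ctrKer P kZ Z (Z ω), u⟫ • W ω‖ ^ 2 ∂P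
        ≤ M ^ 2 * ∫ ω, ⟪ctrKer P kZ Z (Z ω), u⟫ ^ 2 ∂P := by
      rw [← integral_const_mul]
      refine integral_mono_ae hAuSqInt ((hIu2 u).const_mul (M ^ 2)) ?_
      filter_upwards [hWbd] with ω hω
      rw [norm_smul, mul_pow, Real.norm_eq_abs, sq_abs]
      have h1 : ‖W ω‖ ^ 2 ≤ M ^ 2 := by nlinarith [norm_nonneg (W ω)]
      nlinarith [sq_nonneg (⟪ctrKer P kZ Z (Z ω), u⟫ : ℝ)]
    have hAiSq : ∀ i, ∫ ω, ‖⟪ctrKer P kZ Z (Zs i ω), u⟫ • Ws i ω‖ ^ 2 ∂P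
        = ∫ ω, ‖⟪ctrKer P kZ Z (Z ω), u⟫ • W ω‖ ^ 2 ∂P :=
      fun i => ((hAid i).comp (measurable_norm.pow_const 2)).integral_eq
    have hinner_int : ∀ i j, Integrable (fun ω =>
        ⟪⟪ctrKer P kZ Z (Zs i ω), u⟫ • Ws i ω, ⟪ctrKer P kZ Z (Zs j ω), u⟫ • Ws j ω⟫) P := by
      intro i j
      refine ((hAiSqInt i).add (hAiSqInt j)).mono'
        ((hAiMeas i).inner (hAiMeas j)).aestronglyMeasurable ?_
      refine Filter.Eventually.of_forall fun ω => ?_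
      simp only [Pi.add_apply, Real.norm_eq_abs]
      have h1 := abs_real_inner_le_norm (⟪ctrKer P kZ Z (Zs i ω), u⟫ • Ws i ω)
        (⟪ctrKer P kZ Z (Zs j ω), u⟫ • Ws j ω)
      nlinarith [norm_nonneg (⟪ctrKer P kZ Z (Zs i ω), u⟫ • Ws i ω),
        norm_nonneg (⟪ctrKer P kZ Z (Zs j ω), u⟫ • Ws j ω),
        sq_nonneg (‖⟪ctrKer P kZ Z (Zs i ω), u⟫ • Ws i ω‖
          - ‖⟪ctrKer P kZ Z (Zs j ω), u⟫ • Ws j ω‖)]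
    have hcross : ∀ i j, i ≠ j → ∫ ω,
        ⟪⟪ctrKer P kZ Z (Zs i ω), u⟫ • Ws i ω, ⟪ctrKer P kZ Z (Zs j ω), u⟫ • Ws j ω⟫ ∂P = 0 := by
      intro i j hij
      have hind : IndepFun (fun ω => ⟪ctrKer P kZ Z (Zs i ω), u⟫ • Ws i ω)
          (fun ω => ⟪ctrKer P kZ Z (Zs j ω), u⟫ • Ws j ω) P :=
        (hiid.indepFun hij).comp hg hg
      rw [IndepFun.integral_inner_eq P (hAiMeas i) (hAiMeas j) (hAiInt i) (hAiInt j) hind,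
        hAi0 i, hAi0 j, inner_zero_left]
    have hsumL2 : MemLp (fun ω => ∑ i ∈ Finset.range n,
        ⟪ctrKer P kZ Z (Zs i ω), u⟫ • Ws i ω) 2 P :=
      memLp_finset_sum (Finset.range n) (fun i _ => hAiL2 i)
    have hsumSqInt : Integrable (fun ω =>
        ‖∑ i ∈ Finset.range n, ⟪ctrKer P kZ Z (Zs i ω), u⟫ • Ws i ω‖ ^ 2) P :=
      (memLp_two_iff_integrable_sq_norm hsumL2.aestronglyMeasurable).mp hsumL2
    have hexp : ∫ ω, ‖∑ i ∈ Finset.range n, ⟪ctrKer P kZ Z (Zs i ω), u⟫ • Ws i ω‖ ^ 2 ∂P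
        = (n : ℝ) * ∫ ω, ‖⟪ctrKer P kZ Z (Z ω), u⟫ • W ω‖ ^ 2 ∂P := by
      calc ∫ ω, ‖∑ i ∈ Finset.range n, ⟪ctrKer P kZ Z (Zs i ω), u⟫ • Ws i ω‖ ^ 2 ∂P
          = ∫ ω, ∑ j ∈ Finset.range n, ∑ i ∈ Finset.range n,
              ⟪⟪ctrKer P kZ Z (Zs i ω), u⟫ • Ws i ω, ⟪ctrKer P kZ Z (Zs j ω), u⟫ • Ws j ω⟫ ∂P := by
            refine integral_congr_ae (Filter.Eventually.of_forall fun ω => ?_)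
            simp only
            rw [← real_inner_self_eq_norm_sq, inner_sum]
            refine Finset.sum_congr rfl fun j _ => ?_
            rw [sum_inner]
        _ = ∑ j ∈ Finset.range n, ∑ i ∈ Finset.range n, ∫ ω,
              ⟪⟪ctrKer P kZ Z (Zs i ω), u⟫ • Ws i ω, ⟪ctrKer P kZ Z (Zs j ω), u⟫ • Ws j ω⟫ ∂P := by
            rw [integral_finset_sum _
              (fun j _ => integrable_finset_sum _ (fun i _ => hinner_int i j))]
            exact Finset.sum_congr rfl fun j _ =>
              integral_finset_sum _ (fun i _ => hinner_int i j)
        _ = ∑ j ∈ Finset.range n, ∫ ω, ‖⟪ctrKer P kZ Z (Zs j ω), u⟫ • Ws j ω‖ ^ 2 ∂P := by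
            refine Finset.sum_congr rfl fun j hj => ?_
            rw [Finset.sum_eq_single j]
            · refine integral_congr_ae (Filter.Eventually.of_forall fun ω => ?_)
              exact real_inner_self_eq_norm_sq _
            · exact fun i _ hij => hcross i j hij
            · intro hj'; exact absurd hj hj'
        _ = ∑ _j ∈ Finset.range n, ∫ ω, ‖⟪ctrKer P kZ Z (Z ω), u⟫ • W ω‖ ^ 2 ∂P :=
            Finset.sum_congr rfl fun j _ => hAiSq j
        _ = (n : ℝ) * ∫ ω, ‖⟪ctrKer P kZ Z (Z ω), u⟫ • W ω‖ ^ 2 ∂P := by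
            rw [Finset.sum_const, Finset.card_range, nsmul_eq_mul]
    have hnorm_eq : ∀ ω : Ω, ‖(n : ℝ)⁻¹ •
        ∑ i ∈ Finset.range n, ⟪ctrKer P kZ Z (Zs i ω), u⟫ • Ws i ω‖ ^ 2
        = ((n : ℝ)⁻¹) ^ 2
          * ‖∑ i ∈ Finset.range n, ⟪ctrKer P kZ Z (Zs i ω), u⟫ • Ws i ω‖ ^ 2 := by
      intro ω
      rw [norm_smul, mul_pow, Real.norm_eq_abs, sq_abs]
    constructor
    · exact (hsumSqInt.const_mul (((n : ℝ)⁻¹) ^ 2)).congr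
        (Filter.Eventually.of_forall fun ω => (hnorm_eq ω).symm)
    · have hn0 : (0:ℝ) < n := by positivity
      calc ∫ ω, ‖(n : ℝ)⁻¹ •
            ∑ i ∈ Finset.range n, ⟪ctrKer P kZ Z (Zs i ω), u⟫ • Ws i ω‖ ^ 2 ∂P
          = ((n : ℝ)⁻¹) ^ 2 * ∫ ω,
            ‖∑ i ∈ Finset.range n, ⟪ctrKer P kZ Z (Zs i ω), u⟫ • Ws i ω‖ ^ 2 ∂P := by
            simp_rw [hnorm_eq]
            rw [integral_const_mul]
        _ = ((n : ℝ)⁻¹) ^ 2 * ((n : ℝ)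
            * ∫ ω, ‖⟪ctrKer P kZ Z (Z ω), u⟫ • W ω‖ ^ 2 ∂P) := by rw [hexp]
        _ ≤ ((n : ℝ)⁻¹) ^ 2 * ((n : ℝ)
            * (M ^ 2 * ∫ ω, ⟪ctrKer P kZ Z (Z ω), u⟫ ^ 2 ∂P)) := by
            refine mul_le_mul_of_nonneg_left
              (mul_le_mul_of_nonneg_left hAuSq (le_of_lt hn0)) (by positivity)
        _ = M ^ 2 * (n : ℝ)⁻¹ * ∫ ω, ⟪ctrKer P kZ Z (Z ω), u⟫ ^ 2 ∂P := by
            field_simp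
        _ = M ^ 2 * (n : ℝ)⁻¹ * ⟪u, covOp P kZ Z u⟫ := by rw [hIu u]
  -- basis summability helper
  have hbsq : ∀ x : GZ, Summable fun k => (⟪x, b k⟫ : ℝ) ^ 2 := by
    intro x
    refine (b.summable_inner_mul_inner x x).congr fun k => ?_
    rw [sq, real_inner_comm x (b k)]
  have hbsq_sum : ∀ x : GZ, ∑' k, (⟪x, b k⟫ : ℝ) ^ 2 = ‖x‖ ^ 2 := by
    intro x
    have h := b.tsum_inner_mul_inner x x
    rw [← real_inner_self_eq_norm_sq, ← h]
    exact tsum_congr fun k => by rw [sq, real_inner_comm x (b k)]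
  -- spectral facts
  have hsumspec : ∀ f : GZ, HasSum (fun j => (γ j * ⟪φ j, f⟫) • φ j) (covOp P kZ Z f) := by
    intro f
    have hs2 : Summable fun j => ‖γ j * ⟪φ j, f⟫‖ ^ 2 := by
      refine Summable.of_nonneg_of_le (fun j => by positivity) (fun j => ?_)
        ((hφ.inner_products_summable f).mul_left ((γ 0) ^ 2))
      rw [Real.norm_eq_abs, abs_mul, mul_pow]
      have h1 : |γ j| ≤ γ 0 := by
        rw [abs_of_nonneg (hγpos j)]; exact hγmono (Nat.zero_le j)
      have h2 : |γ j| ^ 2 ≤ (γ 0) ^ 2 := by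
        have := abs_nonneg (γ j); nlinarith
      have h3 : |(⟪φ j, f⟫ : ℝ)| ^ 2 = ‖(⟪φ j, f⟫ : ℝ)‖ ^ 2 := by rw [Real.norm_eq_abs]
      rw [← h3]
      have h4 : (0:ℝ) ≤ |(⟪φ j, f⟫ : ℝ)| ^ 2 := by positivity
      exact mul_le_mul_of_nonneg_right h2 h4
    have hs : Summable fun j => (γ j * ⟪φ j, f⟫) • φ j := by
      have h := (hφ.orthogonalFamily.summable_iff_norm_sq_summable
        (fun j => γ j * ⟪φ j, f⟫)).mpr hs2
      simpa [LinearIsometry.toSpanSingleton_apply] using h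
    have h4 := hs.hasSum
    rwa [← hspec f] at h4
  have hquadsum : ∀ f : GZ, HasSum (fun j => γ j * ⟪φ j, f⟫ ^ 2) ⟪f, covOp P kZ Z f⟫ := by
    intro f
    have h := (hsumspec f).mapL (innerSL ℝ f)
    have he : (fun j => (innerSL ℝ f) ((γ j * ⟪φ j, f⟫) • φ j))
        = fun j => γ j * ⟪φ j, f⟫ ^ 2 := by
      funext j
      simp only [innerSL_apply_apply, real_inner_smul_right]
      rw [real_inner_comm f (φ j)]
      ring
    have h2 : (innerSL ℝ f) (covOp P kZ Z f) = ⟪f, covOp P kZ Z f⟫ := rfl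
    rw [he, h2] at h
    exact h
  have hsym : ∀ f g : GZ, ⟪covOp P kZ Z f, g⟫ = ⟪f, covOp P kZ Z g⟫ := by
    intro f g
    have h1 := (hsumspec f).mapL (innerSL ℝ g)
    have h2 := (hsumspec g).mapL (innerSL ℝ f)
    have he : (fun j => (innerSL ℝ g) ((γ j * ⟪φ j, f⟫) • φ j))
        = fun j => (innerSL ℝ f) ((γ j * ⟪φ j, g⟫) • φ j) := by
      funext j
      simp only [innerSL_apply_apply, real_inner_smul_right]
      rw [real_inner_comm g (φ j), real_inner_comm f (φ j)]
      ring
    rw [he] at h1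
    have h3 := h1.unique h2
    calc ⟪covOp P kZ Z f, g⟫ = ⟪g, covOp P kZ Z f⟫ := real_inner_comm _ _
      _ = ⟪f, covOp P kZ Z g⟫ := h3
  have hTsym : ∀ f g : GZ, ⟪T f, g⟫ = ⟪f, T g⟫ := by
    intro f g
    calc ⟪T f, g⟫ = ⟪covOp P kZ Z f, g⟫ + ε * ⟪f, g⟫ := by
          rw [hTdef]
          simp [inner_add_left, real_inner_smul_left]
      _ = ⟪f, covOp P kZ Z g⟫ + ε * ⟪f, g⟫ := by rw [hsym f g]
      _ = ⟪f, T g⟫ := by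
          rw [hTdef]
          simp [inner_add_right, real_inner_smul_right]
  have hSsym : ∀ f g : GZ, ⟪S f, g⟫ = ⟪f, S g⟫ := by
    intro f g
    have h1 : ⟪S f, g⟫ = ⟪S f, T (S g)⟫ := by rw [hTS g]
    have h2 : ⟪T (S f), S g⟫ = ⟪f, S g⟫ := by rw [hTS f]
    rw [h1, ← hTsym (S f) (S g), h2]
  have hcovφ : ∀ j, covOp P kZ Z (φ j) = γ j • φ j := by
    intro j
    rw [hspec (φ j), tsum_eq_single j ?_]
    · have h1 : (⟪φ j, φ j⟫ : ℝ) = 1 := by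
        rw [real_inner_self_eq_norm_sq, hφ.1 j]; norm_num
      rw [h1, mul_one]
    · intro k hk
      rw [hφ.2 hk]
      simp
  have hTφ : ∀ j, T (φ j) = (γ j + ε) • φ j := by
    intro j
    rw [hTdef]
    simp only [ContinuousLinearMap.add_apply, ContinuousLinearMap.coe_smul',
      Pi.smul_apply, ContinuousLinearMap.one_apply, hcovφ j, add_smul]
  have hSφ : ∀ j, S (φ j) = (γ j + ε)⁻¹ • φ j := by
    intro j
    have hpos : 0 < γ j + ε := by have := hγpos j; linarith
    have h1 : S (T (φ j)) = φ j := hST (φ j)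
    rw [hTφ j, ContinuousLinearMap.map_smul] at h1
    have h2 := congrArg (fun x => (γ j + ε)⁻¹ • x) h1
    rw [smul_smul, inv_mul_cancel₀ (ne_of_gt hpos), one_smul] at h2
    exact h2
  have hnSφ : ∀ j, ‖S (φ j)‖ ^ 2 = ((γ j + ε) ^ 2)⁻¹ := by
    intro j
    have hpos : 0 < γ j + ε := by have := hγpos j; linarith
    rw [hSφ j, norm_smul, Real.norm_eq_abs,
      abs_of_nonneg (le_of_lt (inv_pos.mpr hpos)), hφ.1 j, mul_one, ← inv_pow]
  -- summability of the eigenvalues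
  have hγeq : ∀ j, γ j = ∫ ω, ⟪ctrKer P kZ Z (Z ω), φ j⟫ ^ 2 ∂P := by
    intro j
    rw [hIu (φ j), hcovφ j, real_inner_smul_right]
    have h1 : (⟪φ j, φ j⟫ : ℝ) = 1 := by
      rw [real_inner_self_eq_norm_sq, hφ.1 j]; norm_num
    rw [h1, mul_one]
  have hγsum : Summable γ := by
    refine summable_of_sum_le (c := ∫ ω, ‖ctrKer P kZ Z (Z ω)‖ ^ 2 ∂P) hγpos ?_
    intro s
    have h1 : ∀ j ∈ s, Integrable (fun ω => ⟪ctrKer P kZ Z (Z ω), φ j⟫ ^ 2) P :=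
      fun j _ => hIu2 (φ j)
    have h2 : ∑ j ∈ s, γ j = ∫ ω, ∑ j ∈ s, ⟪ctrKer P kZ Z (Z ω), φ j⟫ ^ 2 ∂P := by
      rw [integral_finset_sum s h1]
      exact Finset.sum_congr rfl fun j _ => hγeq j
    rw [h2]
    refine integral_mono (integrable_finset_sum s h1) hV2 fun ω => ?_
    have h3 := hφ.sum_inner_products_le (𝕜 := ℝ) (s := s) (ctrKer P kZ Z (Z ω))
    calc ∑ j ∈ s, ⟪ctrKer P kZ Z (Z ω), φ j⟫ ^ 2
        = ∑ j ∈ s, ‖(⟪φ j, ctrKer P kZ Z (Z ω)⟫ : ℝ)‖ ^ 2 := by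
          refine Finset.sum_congr rfl fun j _ => ?_
          rw [Real.norm_eq_abs, sq_abs, real_inner_comm]
      _ ≤ ‖ctrKer P kZ Z (Z ω)‖ ^ 2 := h3
  have hratio : Summable (fun j => γ j / (γ j + ε) ^ 2) := by
    refine Summable.of_nonneg_of_le (fun j => div_nonneg (hγpos j) (sq_nonneg _)) (fun j => ?_)
      (hγsum.div_const (ε ^ 2))
    have hpos : 0 < γ j + ε := by have := hγpos j; linarith
    rw [div_le_div_iff₀ (pow_pos hpos 2) (pow_pos hε 2)]
    nlinarith [hγpos j, hε.le, mul_nonneg (hγpos j) hε.le,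
      mul_nonneg (mul_nonneg (hγpos j) (hγpos j)) hε.le,
      mul_nonneg (mul_nonneg (hγpos j) (hγpos j)) (hγpos j)]
  -- rewrite the integrand along the basis
  have hgoal : ∀ ω : Ω, hsNormSq b
      ((((n : ℝ)⁻¹ • ∑ i ∈ Finset.range n,
          rankOne (Ws i ω) (ctrKer P kZ Z (Zs i ω))) : GZ →L[ℝ] G1).comp S)
      = ∑' k, ‖(n : ℝ)⁻¹ • ∑ i ∈ Finset.range n,
          ⟪ctrKer P kZ Z (Zs i ω), S (b k)⟫ • Ws i ω‖ ^ 2 := by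
    intro ω
    unfold hsNormSq
    refine tsum_congr fun k => ?_
    congr 1
    simp only [ContinuousLinearMap.coe_comp', Function.comp_apply,
      ContinuousLinearMap.coe_smul', Pi.smul_apply, ContinuousLinearMap.coe_sum',
      Finset.sum_apply, rankOne_apply]
  -- pointwise summability along the basis
  have hpoint : ∀ ω : Ω, Summable (fun k => ‖(n : ℝ)⁻¹ • ∑ i ∈ Finset.range n,
      ⟪ctrKer P kZ Z (Zs i ω), S (b k)⟫ • Ws i ω‖ ^ 2) := by
    intro ω
    have hstep : ∀ (k : ℕ) (i : ℕ), ‖⟪ctrKer P kZ Z (Zs i ω), S (b k)⟫ • Ws i ω‖ ^ 2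
        = ‖Ws i ω‖ ^ 2 * ⟪S (ctrKer P kZ Z (Zs i ω)), b k⟫ ^ 2 := by
      intro k i
      have h := hSsym (ctrKer P kZ Z (Zs i ω)) (b k)
      rw [norm_smul, mul_pow, Real.norm_eq_abs, sq_abs, ← h]
      ring
    refine Summable.of_nonneg_of_le (fun k => by positivity) (fun k => ?_)
      (((summable_sum (s := Finset.range n) (fun i _ =>
        ((hbsq (S (ctrKer P kZ Z (Zs i ω)))).mul_left (‖Ws i ω‖ ^ 2)))).mul_left (n : ℝ)))
    calc ‖(n : ℝ)⁻¹ • ∑ i ∈ Finset.range n,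
            ⟪ctrKer P kZ Z (Zs i ω), S (b k)⟫ • Ws i ω‖ ^ 2
        ≤ ‖∑ i ∈ Finset.range n, ⟪ctrKer P kZ Z (Zs i ω), S (b k)⟫ • Ws i ω‖ ^ 2 := by
          rw [norm_smul, mul_pow, Real.norm_eq_abs, sq_abs]
          have hn0 : (0:ℝ) < n := by positivity
          have hle : (n:ℝ)⁻¹ ≤ 1 := by
            rw [inv_eq_one_div, div_le_one hn0]
            exact_mod_cast hn
          have h0 : (0:ℝ) ≤ (n:ℝ)⁻¹ := by positivity
          have h1 : ((n:ℝ)⁻¹) ^ 2 ≤ 1 := by nlinarith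
          exact mul_le_of_le_one_left (by positivity) h1
      _ ≤ ((Finset.range n).card : ℝ) * ∑ i ∈ Finset.range n,
            ‖⟪ctrKer P kZ Z (Zs i ω), S (b k)⟫ • Ws i ω‖ ^ 2 := by
          have h2 := norm_sum_le (Finset.range n)
            (fun i => ⟪ctrKer P kZ Z (Zs i ω), S (b k)⟫ • Ws i ω)
          have h3 : ‖∑ i ∈ Finset.range n, ⟪ctrKer P kZ Z (Zs i ω), S (b k)⟫ • Ws i ω‖ ^ 2
              ≤ (∑ i ∈ Finset.range n, ‖⟪ctrKer P kZ Z (Zs i ω), S (b k)⟫ • Ws i ω‖) ^ 2 := by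
            have := norm_nonneg (∑ i ∈ Finset.range n,
              ⟪ctrKer P kZ Z (Zs i ω), S (b k)⟫ • Ws i ω)
            nlinarith [Finset.sum_nonneg (fun i (_ : i ∈ Finset.range n) =>
              norm_nonneg (⟪ctrKer P kZ Z (Zs i ω), S (b k)⟫ • Ws i ω))]
          exact h3.trans (sq_sum_le_card_mul_sum_sq)
      _ = (n : ℝ) * ∑ i ∈ Finset.range n,
            ‖Ws i ω‖ ^ 2 * ⟪S (ctrKer P kZ Z (Zs i ω)), b k⟫ ^ 2 := by
          rw [Finset.card_range]
          congr 1
          exact Finset.sum_congr rfl fun i _ => hstep k i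
  -- measurability in ω for each k
  have hXm : ∀ k : ℕ, Measurable (fun ω => (n : ℝ)⁻¹ • ∑ i ∈ Finset.range n,
      ⟪ctrKer P kZ Z (Zs i ω), S (b k)⟫ • Ws i ω) := by
    intro k
    exact (Finset.measurable_sum (Finset.range n) (fun i _ =>
      ((hVsm i).inner measurable_const).smul (hmeas i).1)).const_smul ((n : ℝ)⁻¹)
  -- put everything together
  calc ∫⁻ ω, ENNReal.ofReal (hsNormSq b
          ((((n : ℝ)⁻¹ • ∑ i ∈ Finset.range n,
              rankOne (Ws i ω) (ctrKer P kZ Z (Zs i ω))) :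
            GZ →L[ℝ] G1).comp S)) ∂P
      = ∫⁻ ω, ∑' k, ENNReal.ofReal (‖(n : ℝ)⁻¹ • ∑ i ∈ Finset.range n,
          ⟪ctrKer P kZ Z (Zs i ω), S (b k)⟫ • Ws i ω‖ ^ 2) ∂P := by
        refine lintegral_congr fun ω => ?_
        rw [hgoal ω, ENNReal.ofReal_tsum_of_nonneg (fun k => by positivity) (hpoint ω)]
    _ = ∑' k, ∫⁻ ω, ENNReal.ofReal (‖(n : ℝ)⁻¹ • ∑ i ∈ Finset.range n,
          ⟪ctrKer P kZ Z (Zs i ω), S (b k)⟫ • Ws i ω‖ ^ 2) ∂P :=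
        lintegral_tsum fun k =>
          (((hXm k).norm.pow_const 2).ennreal_ofReal).aemeasurable
    _ ≤ ∑' k, ENNReal.ofReal (M ^ 2 * (n : ℝ)⁻¹ * ⟪S (b k), covOp P kZ Z (S (b k))⟫) := by
        refine ENNReal.tsum_le_tsum fun k => ?_
        rw [← MeasureTheory.ofReal_integral_eq_lintegral_ofReal (key (S (b k))).1
          (Filter.Eventually.of_forall fun ω => by positivity)]
        exact ENNReal.ofReal_le_ofReal (key (S (b k))).2
    _ = ENNReal.ofReal (M ^ 2 * (n : ℝ)⁻¹)
        * ∑' k, ENNReal.ofReal ⟪S (b k), covOp P kZ Z (S (b k))⟫ := by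
        rw [← ENNReal.tsum_mul_left]
        refine tsum_congr fun k => ?_
        rw [← ENNReal.ofReal_mul (by positivity)]
    _ ≤ ENNReal.ofReal (M ^ 2 * (n : ℝ)⁻¹)
        * ENNReal.ofReal (∑' j, γ j / (γ j + ε) ^ 2) := by
        refine mul_le_mul_right (le_of_eq ?_) _
        calc ∑' k, ENNReal.ofReal ⟪S (b k), covOp P kZ Z (S (b k))⟫
            = ∑' k, ∑' j, ENNReal.ofReal (γ j * ⟪φ j, S (b k)⟫ ^ 2) := by
              refine tsum_congr fun k => ?_
              rw [← (hquadsum (S (b k))).tsum_eq,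
                ENNReal.ofReal_tsum_of_nonneg
                  (fun j => mul_nonneg (hγpos j) (sq_nonneg _))
                  (hquadsum (S (b k))).summable]
          _ = ∑' j, ∑' k, ENNReal.ofReal (γ j * ⟪φ j, S (b k)⟫ ^ 2) := ENNReal.tsum_comm
          _ = ∑' j, ENNReal.ofReal (γ j / (γ j + ε) ^ 2) := by
              refine tsum_congr fun j => ?_
              have hj : ∀ k : ℕ, (⟪φ j, S (b k)⟫ : ℝ) = ⟪S (φ j), b k⟫ :=
                fun k => (hSsym (φ j) (b k)).symm
              have hsummable : Summable fun k => γ j * (⟪S (φ j), b k⟫ : ℝ) ^ 2 :=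
                (hbsq (S (φ j))).mul_left (γ j)
              calc ∑' k, ENNReal.ofReal (γ j * ⟪φ j, S (b k)⟫ ^ 2)
                  = ∑' k, ENNReal.ofReal (γ j * ⟪S (φ j), b k⟫ ^ 2) := by
                    refine tsum_congr fun k => ?_
                    rw [hj k]
                _ = ENNReal.ofReal (∑' k, γ j * ⟪S (φ j), b k⟫ ^ 2) :=
                    (ENNReal.ofReal_tsum_of_nonneg
                      (fun k => mul_nonneg (hγpos j) (sq_nonneg _)) hsummable).symm
                _ = ENNReal.ofReal (γ j * ‖S (φ j)‖ ^ 2) := by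
                    rw [tsum_mul_left, hbsq_sum (S (φ j))]
                _ = ENNReal.ofReal (γ j / (γ j + ε) ^ 2) := by
                    rw [hnSφ j, div_eq_mul_inv]
          _ = ENNReal.ofReal (∑' j, γ j / (γ j + ε) ^ 2) :=
              (ENNReal.ofReal_tsum_of_nonneg
                (fun j => div_nonneg (hγpos j) (sq_nonneg _)) hratio).symm
    _ = ENNReal.ofReal (M ^ 2 * (n : ℝ)⁻¹ * ∑' k, γ k / (γ k + ε) ^ 2) := by
        rw [← ENNReal.ofReal_mul (by positivity)]
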